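/- In the ring of 3×3 matrices over the Laurent polynomial ring ℤ[t, t⁻¹], for every integer n ≥ 1, the product Σ₁ⁿ · Σ₂⁻¹ · Σ₁ · (Σ₂⁻¹)ⁿ equals the matrix [[(1−t)·A_n, A_{n−1}·B_{n−1} + A_n·B_{n−2}, t·(A_n·B_{n−1} + A_{n−1}·B_n)], [(1−t)·A_{n−1}, A_{n−1}·B_{n−2} + A_{n−2}·B_{n−1}, t·(A_{n−1}·B_{n−1} + A_{n−2}·B_n)], [t⁻¹, t⁻¹·(1−t⁻¹)·B_{n−1}, (1−t⁻¹)·B_n]]. -/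

import Mathlib

open LaurentPolynomial

/-- `A_m = Σ_{j=0}^{m} (−t)^j` for `m ≥ 0`, with `A_{−1} = 0`. -/
noncomputable def burauA (m : ℤ) : ℤ[T;T⁻¹] :=
  ∑ j ∈ Finset.range (m + 1).toNat, (-(T 1 : ℤ[T;T⁻¹])) ^ j

/-- `B_m = Σ_{k=0}^{m} (−t⁻¹)^k` for `m ≥ 0`, with `B_{−1} = 0`. -/
noncomputable def burauB (m : ℤ) : ℤ[T;T⁻¹] :=
  ∑ k ∈ Finset.range (m + 1).toNat, (-(T (-1) : ℤ[T;T⁻¹])) ^ k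

/-- The unreduced Burau matrix of `σ₁` on three strands. -/
noncomputable def Sigma1 : Matrix (Fin 3) (Fin 3) ℤ[T;T⁻¹] :=
  !![1 - T 1, T 1, 0; 1, 0, 0; 0, 0, 1]

/-- The unreduced Burau matrix of `σ₂⁻¹` on three strands. -/
noncomputable def Sigma2Inv : Matrix (Fin 3) (Fin 3) ℤ[T;T⁻¹] :=
  !![1, 0, 0; 0, 0, 1; 0, T (-1), 1 - T (-1)]

noncomputable def aaSeq (k : ℕ) : ℤ[T;T⁻¹] := ∑ j ∈ Finset.range k, (-(T 1 : ℤ[T;T⁻¹])) ^ j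

noncomputable def bbSeq (k : ℕ) : ℤ[T;T⁻¹] := ∑ j ∈ Finset.range k, (-(T (-1) : ℤ[T;T⁻¹])) ^ j

lemma aaSeq_succ (k : ℕ) : aaSeq (k + 1) = 1 - T 1 * aaSeq k := by
  simp only [aaSeq, geom_sum_succ]; ring

lemma bbSeq_succ (k : ℕ) : bbSeq (k + 1) = 1 - T (-1) * bbSeq k := by
  simp only [bbSeq, geom_sum_succ]; ring

lemma Tmul : (T (-1) : ℤ[T;T⁻¹]) * T 1 = 1 := by
  rw [← T_add]; norm_num

lemma Sigma1_pow (m : ℕ) :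
    Sigma1 ^ (m + 1) =
      !![aaSeq (m + 2), T 1 * aaSeq (m + 1), 0;
         aaSeq (m + 1), T 1 * aaSeq m, 0;
         0, 0, 1] := by
  induction m with
  | zero =>
      rw [pow_one, Sigma1]
      ext i j
      fin_cases i <;> fin_cases j <;>
        simp [aaSeq, Finset.sum_range_succ] <;> ring
  | succ k ih =>
      rw [pow_succ, ih, Sigma1, Matrix.mul_fin_three]
      have h1 : aaSeq (k + 3) = 1 - T 1 * aaSeq (k + 2) := aaSeq_succ (k + 2)
      have h2 : aaSeq (k + 2) = 1 - T 1 * aaSeq (k + 1) := aaSeq_succ (k + 1)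
      have h3 : aaSeq (k + 1) = 1 - T 1 * aaSeq k := aaSeq_succ k
      refine Matrix.ext fun i j => ?_
      fin_cases i <;> fin_cases j <;>
        simp <;>
        (try simp only [show 1 + k = k + 1 from by omega, show 2 + k = k + 2 from by omega,
          show 3 + k = k + 3 from by omega, show k + 1 + 1 = k + 2 from rfl,
          show k + 1 + 2 = k + 3 from rfl]) <;>
        first
          | ring1
          | linear_combination h2 - h1
          | linear_combination h3 - h2

lemma Sigma2Inv_pow (m : ℕ) :
    Sigma2Inv ^ (m + 1) =
      !![1, 0, 0;
         0, T (-1) * bbSeq m, bbSeq (m + 1);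
         0, T (-1) * bbSeq (m + 1), bbSeq (m + 2)] := by
  induction m with
  | zero =>
      rw [pow_one, Sigma2Inv]
      ext i j
      fin_cases i <;> fin_cases j <;>
        simp [bbSeq, Finset.sum_range_succ] <;> ring
  | succ k ih =>
      rw [pow_succ, ih, Sigma2Inv, Matrix.mul_fin_three]
      have h1 : bbSeq (k + 3) = 1 - T (-1) * bbSeq (k + 2) := bbSeq_succ (k + 2)
      have h2 : bbSeq (k + 2) = 1 - T (-1) * bbSeq (k + 1) := bbSeq_succ (k + 1)
      have h3 : bbSeq (k + 1) = 1 - T (-1) * bbSeq k := bbSeq_succ k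
      refine Matrix.ext fun i j => ?_
      fin_cases i <;> fin_cases j <;>
        simp <;>
        (try simp only [show 1 + k = k + 1 from by omega, show 2 + k = k + 2 from by omega,
          show 3 + k = k + 3 from by omega, show k + 1 + 1 = k + 2 from rfl,
          show k + 1 + 2 = k + 3 from rfl]) <;>
        first
          | ring1
          | linear_combination h2 - h1
          | linear_combination h3 - h2

theorem burau_image_lemniscate_braid_word (n : ℕ) (hn : 1 ≤ n) :
    Sigma1 ^ n * Sigma2Inv * Sigma1 * Sigma2Inv ^ n =
      !![(1 - T 1) * burauA n,
           burauA ((n : ℤ) - 1) * burauB ((n : ℤ) - 1) + burauA n * burauB ((n : ℤ) - 2),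
           T 1 * (burauA n * burauB ((n : ℤ) - 1) + burauA ((n : ℤ) - 1) * burauB n);
         (1 - T 1) * burauA ((n : ℤ) - 1),
           burauA ((n : ℤ) - 1) * burauB ((n : ℤ) - 2) +
             burauA ((n : ℤ) - 2) * burauB ((n : ℤ) - 1),
           T 1 * (burauA ((n : ℤ) - 1) * burauB ((n : ℤ) - 1) +
             burauA ((n : ℤ) - 2) * burauB n);
         T (-1), T (-1) * (1 - T (-1)) * burauB ((n : ℤ) - 1), (1 - T (-1)) * burauB n] := by
  obtain ⟨m, rfl⟩ : ∃ m, n = m + 1 := ⟨n - 1, (Nat.succ_pred_eq_of_pos hn).symm⟩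
  have e0 : (((m + 1 : ℕ) : ℤ) + 1).toNat = m + 2 := by omega
  have e1 : (((m + 1 : ℕ) : ℤ) - 1 + 1).toNat = m + 1 := by omega
  have e2 : (((m + 1 : ℕ) : ℤ) - 2 + 1).toNat = m := by omega
  have hA0 : burauA ((m + 1 : ℕ) : ℤ) = aaSeq (m + 2) := by rw [burauA, aaSeq, e0]
  have hA1 : burauA (((m + 1 : ℕ) : ℤ) - 1) = aaSeq (m + 1) := by rw [burauA, aaSeq, e1]
  have hA2 : burauA (((m + 1 : ℕ) : ℤ) - 2) = aaSeq m := by rw [burauA, aaSeq, e2]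
  have hB0 : burauB ((m + 1 : ℕ) : ℤ) = bbSeq (m + 2) := by rw [burauB, bbSeq, e0]
  have hB1 : burauB (((m + 1 : ℕ) : ℤ) - 1) = bbSeq (m + 1) := by rw [burauB, bbSeq, e1]
  have hB2 : burauB (((m + 1 : ℕ) : ℤ) - 2) = bbSeq m := by rw [burauB, bbSeq, e2]
  rw [hA0, hA1, hA2, hB0, hB1, hB2, Sigma1_pow, Sigma2Inv_pow]
  have hT := Tmul
  rw [show (Sigma2Inv : Matrix (Fin 3) (Fin 3) ℤ[T;T⁻¹]) =
        !![1, 0, 0; 0, 0, 1; 0, T (-1), 1 - T (-1)] from rfl,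
     show (Sigma1 : Matrix (Fin 3) (Fin 3) ℤ[T;T⁻¹]) =
        !![1 - T 1, T 1, 0; 1, 0, 0; 0, 0, 1] from rfl,
     Matrix.mul_fin_three, Matrix.mul_fin_three, Matrix.mul_fin_three]
  refine Matrix.ext fun i j => ?_
  fin_cases i <;> fin_cases j <;>
    simp <;>
    (try simp only [show 1 + m = m + 1 from by omega, show 2 + m = m + 2 from by omega]) <;>
    first
      | ring1
      | linear_combination (aaSeq (m + 2) * bbSeq m + aaSeq (m + 1) * bbSeq (m + 1)) * hT
      | linear_combination (aaSeq (m + 1) * bbSeq m + aaSeq m * bbSeq (m + 1)) * hT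
      | linear_combination (bbSeq (m + 1)) * hT
      | linear_combination (-(T (-1) : ℤ[T;T⁻¹]) * bbSeq (m + 1)) * hT
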